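/- For every α > 0 the function z_α(u) = ln( G_α(g_α(u)) / α ), where G_α(τ) = α²·cos²τ + sin²τ and g_α is the inverse of h_α(x) = √α · ∫₀ˣ G_α(τ)^{−1/2} dτ, is periodic with period ω = h_α(π): z_α(u + h_α(π)) = z_α(u) for all u ∈ ℝ. Consequently every solution of z'' + 4·sinh z = 0 on ℝ is periodic. -/

import Mathlib

open Real

noncomputable section

/-- `G_α(τ) = α²·cos²τ + sin²τ`. -/
def Gfun (α τ : ℝ) : ℝ := α ^ 2 * Real.cos τ ^ 2 + Real.sin τ ^ 2

/-- `h_α(x) = √α · ∫₀ˣ G_α(τ)^{−1/2} dτ`. -/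
def hfun (α : ℝ) (x : ℝ) : ℝ := Real.sqrt α * ∫ τ in (0:ℝ)..x, 1 / Real.sqrt (Gfun α τ)

/-- `g_α`, the inverse function of `h_α`. -/
def gfun (α : ℝ) : ℝ → ℝ := Function.invFun (hfun α)

/-- `z_α(u) = ln( G_α(g_α(u)) / α )`. -/
def zfun (α : ℝ) (u : ℝ) : ℝ := Real.log (Gfun α (gfun α u) / α)

open Set

/-- Linear growth lemma. -/
lemma stmt14_linGrow (f : ℝ → ℝ) (hf : Differentiable ℝ f) (d m : ℝ)
    (hm : ∀ u, d ≤ u → m ≤ deriv f u) : ∀ u, d ≤ u → f d + m * (u - d) ≤ f u := by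
  intro u hu
  set g : ℝ → ℝ := fun x => f x - m * x with hg
  have hgdiff : Differentiable ℝ g := hf.sub (differentiable_id.const_mul m)
  have hgd : ∀ x, deriv g x = deriv f x - m := by
    intro x
    have : HasDerivAt g (deriv f x - m * 1) x :=
      ((hf x).hasDerivAt).sub ((hasDerivAt_id x).const_mul m)
    simpa using this.deriv
  have hmono : MonotoneOn g (Ici d) := by
    apply monotoneOn_of_deriv_nonneg (convex_Ici d) hgdiff.continuous.continuousOn
      (hgdiff.differentiableOn)
    intro x hx
    rw [interior_Ici] at hx
    rw [hgd]
    have := hm x (le_of_lt hx)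
    linarith
  have := hmono (self_mem_Ici) (mem_Ici.mpr hu) hu
  simp only [hg] at this
  linarith

/-- No solution can have everywhere-positive derivative on a half-line. -/
lemma stmt14_noZero (z : ℝ → ℝ) (hz1 : Differentiable ℝ z) (hp : Differentiable ℝ (deriv z))
    (hode : ∀ u, deriv (deriv z) u = -(4 * Real.sinh (z u)))
    (c : ℝ) (hpos : ∀ u, c ≤ u → 0 < deriv z u) : False := by
  by_cases hcase : ∃ d, c ≤ d ∧ 0 < z d
  · obtain ⟨d, hcd, hzd⟩ := hcase
    -- z is nondecreasing on [d, ∞)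
    have hmono : ∀ u, d ≤ u → z d ≤ z u := by
      intro u hu
      have := stmt14_linGrow z hz1 d 0 (fun u hu => le_of_lt (hpos u (le_trans hcd hu))) u hu
      linarith
    -- -p grows linearly
    have hsd : 0 < Real.sinh (z d) := by
      rw [← Real.sinh_zero]
      exact Real.sinh_lt_sinh.mpr hzd
    have hup : ∀ u, d ≤ u → -(deriv z d) + (4 * Real.sinh (z d)) * (u - d) ≤ -(deriv z u) := by
      apply stmt14_linGrow _ hp.neg
      intro u hu
      have h1 : deriv (-(deriv z)) u = -(deriv (deriv z) u) := deriv.neg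
      rw [h1, hode u]
      have : Real.sinh (z d) ≤ Real.sinh (z u) := Real.sinh_le_sinh.mpr (hmono u hu)
      linarith
    have hq : 0 ≤ (deriv z d + 1) / (4 * Real.sinh (z d)) := by
      apply div_nonneg _ (by linarith)
      have := hpos d hcd
      linarith
    have hdu : d ≤ d + (deriv z d + 1) / (4 * Real.sinh (z d)) := by linarith
    have h2 := hup _ hdu
    have h3 : (4 * Real.sinh (z d)) * ((d + (deriv z d + 1) / (4 * Real.sinh (z d))) - d)
        = deriv z d + 1 := by
      field_simp
      ring
    rw [h3] at h2
    have := hpos _ (le_trans hcd hdu)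
    linarith
  · push_neg at hcase
    -- p nondecreasing, so z grows linearly
    have hpc : 0 < deriv z c := hpos c le_rfl
    have hpmono : ∀ u, c ≤ u → deriv z c ≤ deriv z u := by
      intro u hu
      have := stmt14_linGrow (deriv z) hp c 0 (fun u hu => by
        rw [hode u]
        have : Real.sinh (z u) ≤ 0 := by
          rw [← Real.sinh_zero]
          exact Real.sinh_le_sinh.mpr (hcase u hu)
        linarith) u hu
      linarith
    have hzgrow := stmt14_linGrow z hz1 c (deriv z c) hpmono
    have hq : 0 ≤ (1 - z c) / (deriv z c) := by
      apply div_nonneg _ (le_of_lt hpc)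
      have := hcase c le_rfl
      linarith
    have hcu : c ≤ c + (1 - z c) / (deriv z c) := by linarith
    have h2 := hzgrow _ hcu
    have h3 : deriv z c * ((c + (1 - z c) / (deriv z c)) - c) = 1 - z c := by
      field_simp
      ring
    rw [h3] at h2
    have := hcase _ hcu
    linarith

/-- Existence of stmt14_zeros of the derivative on every half-line. -/
lemma stmt14_zeros (z : ℝ → ℝ) (hz1 : Differentiable ℝ z) (hp : Differentiable ℝ (deriv z))
    (hode : ∀ u, deriv (deriv z) u = -(4 * Real.sinh (z u)))
    (c : ℝ) : ∃ a, c ≤ a ∧ deriv z a = 0 := by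
  by_contra hcon
  push_neg at hcon
  have hcont : Continuous (deriv z) := hp.continuous
  -- sign is constant on [c, ∞)
  rcases lt_or_gt_of_ne (hcon c le_rfl) with hneg | hposc
  · -- deriv z c < 0 : show ∀ u ≥ c, deriv z u < 0, then apply stmt14_noZero to -z
    have hsign : ∀ u, c ≤ u → deriv z u < 0 := by
      intro u hu
      rcases lt_or_gt_of_ne (hcon u hu) with h | h
      · exact h
      · exfalso
        have : (0:ℝ) ∈ Icc (deriv z c) (deriv z u) := ⟨le_of_lt hneg, le_of_lt h⟩
        obtain ⟨x, hx, hx0⟩ := intermediate_value_Icc hu hcont.continuousOn this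
        exact hcon x hx.1 hx0
    have hd : (deriv fun x => -z x) = fun x => -(deriv z x) := funext fun x => deriv.neg
    apply stmt14_noZero (fun x => -z x) hz1.neg (by rw [hd]; exact hp.neg) ?_ c
    · intro u hu
      rw [hd]
      simpa using (hsign u hu)
    · intro u
      rw [hd]
      have : deriv (fun x => -(deriv z x)) u = -(deriv (deriv z) u) := deriv.neg
      rw [this, hode u, Real.sinh_neg]
      ring
  · have hsign : ∀ u, c ≤ u → 0 < deriv z u := by
      intro u hu
      rcases lt_or_gt_of_ne (hcon u hu) with h | h
      · exfalso
        have : (0:ℝ) ∈ Icc (deriv z u) (deriv z c) := ⟨le_of_lt h, le_of_lt hposc⟩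
        obtain ⟨x, hx, hx0⟩ := intermediate_value_Icc' hu hcont.continuousOn this
        exact hcon x hx.1 hx0
      · exact h
    exact stmt14_noZero z hz1 hp hode c hsign

lemma stmt14_sinh_lip (M : ℝ) (hM : 0 ≤ M) {x y : ℝ} (hx : x ∈ Icc (-M) M) (hy : y ∈ Icc (-M) M) :
    |Real.sinh x - Real.sinh y| ≤ Real.cosh M * |x - y| := by
  have h := Convex.norm_image_sub_le_of_norm_deriv_le
    (f := Real.sinh) (s := Icc (-M) M) (C := Real.cosh M)
    (fun t _ => (Real.hasDerivAt_sinh t).differentiableAt)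
    (fun t ht => by
      rw [(Real.hasDerivAt_sinh t).deriv]
      rw [Real.norm_eq_abs, abs_of_pos (Real.cosh_pos t)]
      rw [← Real.cosh_abs]
      apply Real.cosh_le_cosh.mpr
      rw [abs_abs, abs_of_nonneg hM]
      exact abs_le.mpr ⟨ht.1, ht.2⟩)
    (convex_Icc _ _) hy hx
  simpa [Real.norm_eq_abs] using h

/-- Reflection principle: if the derivative vanishes at `a`, the solution is symmetric about `a`. -/
lemma stmt14_reflect (z : ℝ → ℝ) (hz1 : Differentiable ℝ z) (hp : Differentiable ℝ (deriv z))
    (hode : ∀ u, deriv (deriv z) u = -(4 * Real.sinh (z u)))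
    (M : ℝ) (hM0 : 0 ≤ M) (hM : ∀ u, |z u| ≤ M)
    (a : ℝ) (ha : deriv z a = 0) : ∀ u, z (2 * a - u) = z u := by
  set v : ℝ → ℝ × ℝ → ℝ × ℝ := fun _ q => (q.2, -(4 * Real.sinh q.1)) with hv
  set s : Set (ℝ × ℝ) := Icc (-M) M ×ˢ (univ : Set ℝ) with hs
  set K : NNReal := Real.toNNReal (max 1 (4 * Real.cosh M)) with hK
  have hKval : (K : ℝ) = max 1 (4 * Real.cosh M) := by
    rw [hK, Real.coe_toNNReal]
    positivity
  have hlip : ∀ t : ℝ, LipschitzOnWith K (v t) s := by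
    intro t
    apply LipschitzOnWith.of_dist_le_mul
    intro x hx y hy
    rw [Prod.dist_eq, Prod.dist_eq]
    rw [hKval]
    have hx1 : x.1 ∈ Icc (-M) M := hx.1
    have hy1 : y.1 ∈ Icc (-M) M := hy.1
    have hsinh := stmt14_sinh_lip M hM0 hx1 hy1
    have h2 : dist (v t x).2 (v t y).2 ≤ 4 * Real.cosh M * dist x.1 y.1 := by
      simp only [hv, Real.dist_eq]
      have : -(4 * Real.sinh x.1) - -(4 * Real.sinh y.1) = -(4 * (Real.sinh x.1 - Real.sinh y.1)) := by ring
      rw [this, abs_neg, abs_mul, abs_of_nonneg (by norm_num : (0:ℝ) ≤ 4)]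
      calc 4 * |Real.sinh x.1 - Real.sinh y.1| ≤ 4 * (Real.cosh M * |x.1 - y.1|) := by linarith
        _ = 4 * Real.cosh M * |x.1 - y.1| := by ring
    have h3 : dist (v t x).1 (v t y).1 = dist x.2 y.2 := rfl
    have hd1 : dist x.1 y.1 ≤ max (dist x.1 y.1) (dist x.2 y.2) := le_max_left _ _
    have hd2 : dist x.2 y.2 ≤ max (dist x.1 y.1) (dist x.2 y.2) := le_max_right _ _
    have hch : (0:ℝ) ≤ 4 * Real.cosh M := by positivity
    apply max_le
    · rw [h3]
      calc dist x.2 y.2 ≤ max (dist x.1 y.1) (dist x.2 y.2) := hd2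
        _ = 1 * max (dist x.1 y.1) (dist x.2 y.2) := by ring
        _ ≤ max 1 (4 * Real.cosh M) * max (dist x.1 y.1) (dist x.2 y.2) := by
            apply mul_le_mul_of_nonneg_right (le_max_left _ _)
            positivity
    · calc dist (v t x).2 (v t y).2 ≤ 4 * Real.cosh M * dist x.1 y.1 := h2
        _ ≤ max 1 (4 * Real.cosh M) * max (dist x.1 y.1) (dist x.2 y.2) := by
            apply mul_le_mul (le_max_right _ _) hd1 dist_nonneg
            positivity
  set F : ℝ → ℝ × ℝ := fun u => (z u, deriv z u) with hF
  set G : ℝ → ℝ × ℝ := fun u => (z (2 * a - u), -(deriv z (2 * a - u))) with hG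
  have hF' : ∀ t : ℝ, HasDerivAt F (v t (F t)) t := by
    intro t
    have h1 : HasDerivAt z (deriv z t) t := (hz1 t).hasDerivAt
    have h2 : HasDerivAt (deriv z) (-(4 * Real.sinh (z t))) t := by
      have := (hp t).hasDerivAt
      rwa [hode t] at this
    exact h1.prodMk h2
  have hinner : ∀ t : ℝ, HasDerivAt (fun u : ℝ => 2 * a - u) (-1) t := by
    intro t
    simpa using (hasDerivAt_id t).const_sub (2 * a)
  have hG' : ∀ t : ℝ, HasDerivAt G (v t (G t)) t := by
    intro t
    have h1 : HasDerivAt (fun u : ℝ => z (2 * a - u)) (deriv z (2 * a - t) * (-1)) t :=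
      (hz1 (2 * a - t)).hasDerivAt.comp t (hinner t)
    have h2 : HasDerivAt (fun u : ℝ => deriv z (2 * a - u))
        (deriv (deriv z) (2 * a - t) * (-1)) t :=
      (hp (2 * a - t)).hasDerivAt.comp t (hinner t)
    have h3 := h1.prodMk h2.neg
    have : (deriv z (2 * a - t) * (-1), -(deriv (deriv z) (2 * a - t) * (-1)))
        = v t (G t) := by
      rw [hode (2 * a - t)]
      simp only [hv, hG]
      rw [Prod.mk.injEq]
      constructor <;> ring
    rwa [this] at h3
  have hFs : ∀ t : ℝ, F t ∈ s := by
    intro t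
    refine ⟨abs_le.mp (hM t), trivial⟩
  have hGs : ∀ t : ℝ, G t ∈ s := by
    intro t
    refine ⟨abs_le.mp (hM _), trivial⟩
  have heq : F a = G a := by
    simp only [hF, hG]
    have : 2 * a - a = a := by ring
    rw [this, ha]
    norm_num
  intro u
  have hmem : a ∈ Ioo (a - (|u - a| + 1)) (a + (|u - a| + 1)) := by
    constructor <;> [linarith [abs_nonneg (u - a)]; linarith [abs_nonneg (u - a)]]
  have humem : u ∈ Ioo (a - (|u - a| + 1)) (a + (|u - a| + 1)) := by
    have h1 := abs_le.mp (le_refl |u - a|)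
    constructor <;> [linarith [neg_abs_le (u - a)]; linarith [le_abs_self (u - a)]]
  have := ODE_solution_unique_of_mem_Ioo (fun t _ => hlip t) hmem
    (fun t _ => ⟨hF' t, hFs t⟩) (fun t _ => ⟨hG' t, hGs t⟩) heq humem
  have h1 : z u = z (2 * a - u) := congrArg Prod.fst this
  exact h1.symm

lemma stmt14_bound (z : ℝ → ℝ) (hz1 : Differentiable ℝ z) (hp : Differentiable ℝ (deriv z))
    (hode : ∀ u, deriv (deriv z) u = -(4 * Real.sinh (z u))) :
    ∃ M, 0 ≤ M ∧ ∀ u, |z u| ≤ M := by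
  obtain ⟨e, he8, hconst⟩ : ∃ e, 8 ≤ e ∧ ∀ u, (deriv z u) ^ 2 + 8 * Real.cosh (z u) = e := by
    have hE' : ∀ u, HasDerivAt (fun u => (deriv z u) ^ 2 + 8 * Real.cosh (z u)) 0 u := by
      intro u
      have h1 : HasDerivAt z (deriv z u) u := (hz1 u).hasDerivAt
      have h2 : HasDerivAt (deriv z) (-(4 * Real.sinh (z u))) u := by
        have := (hp u).hasDerivAt
        rwa [hode u] at this
      have hsq : HasDerivAt (fun x => (deriv z x) ^ 2)
          ((2 : ℕ) * (deriv z u) ^ 1 * (-(4 * Real.sinh (z u)))) u := h2.pow 2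
      have hcosh : HasDerivAt (fun x => Real.cosh (z x)) (Real.sinh (z u) * deriv z u) u :=
        (Real.hasDerivAt_cosh (z u)).comp u h1
      have := hsq.add (hcosh.const_mul 8)
      have heq : (2 : ℕ) * (deriv z u) ^ 1 * (-(4 * Real.sinh (z u)))
          + 8 * (Real.sinh (z u) * deriv z u) = 0 := by push_cast; ring
      rwa [heq] at this
    refine ⟨deriv z 0 ^ 2 + 8 * Real.cosh (z 0),
      by nlinarith [Real.one_le_cosh (z 0), sq_nonneg (deriv z 0)], fun u => ?_⟩
    exact is_const_of_deriv_eq_zero (fun x => (hE' x).differentiableAt)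
      (fun x => (hE' x).deriv) u 0
  refine ⟨Real.log (e / 4), Real.log_nonneg (by linarith), fun u => ?_⟩
  rw [Real.le_log_iff_exp_le (by linarith)]
  have hle : 8 * Real.cosh (z u) ≤ e := by
    have := hconst u
    have h2 := sq_nonneg (deriv z u)
    nlinarith
  have hexp : Real.exp |z u| ≤ 2 * Real.cosh (z u) := by
    rw [Real.cosh_eq]
    rcases abs_cases (z u) with ⟨h, _⟩ | ⟨h, _⟩ <;> rw [h]
    · have := Real.exp_pos (-(z u)); linarith
    · have := Real.exp_pos (z u); linarith
  linarith

lemma stmt14_part2 (z : ℝ → ℝ) (hz : ContDiff ℝ 2 z)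
    (hode : ∀ u : ℝ, deriv (deriv z) u + 4 * Real.sinh (z u) = 0) :
    ∃ T : ℝ, 0 < T ∧ ∀ u : ℝ, z (u + T) = z u := by
  have hz1 : Differentiable ℝ z := hz.differentiable (by norm_num)
  have hz2 : ContDiff ℝ ((1 : WithTop ℕ∞) + 1) z := by norm_num; exact hz
  have hp : Differentiable ℝ (deriv z) :=
    ((contDiff_succ_iff_deriv.mp hz2).2.2).differentiable one_ne_zero
  have hode' : ∀ u, deriv (deriv z) u = -(4 * Real.sinh (z u)) := by
    intro u; have := hode u; linarith
  obtain ⟨M, hM0, hM⟩ := stmt14_bound z hz1 hp hode'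
  obtain ⟨a, _, ha⟩ := stmt14_zeros z hz1 hp hode' 0
  obtain ⟨b, hab, hb⟩ := stmt14_zeros z hz1 hp hode' (a + 1)
  refine ⟨2 * (b - a), by linarith, fun u => ?_⟩
  have ra := stmt14_reflect z hz1 hp hode' M hM0 hM a ha
  have rb := stmt14_reflect z hz1 hp hode' M hM0 hM b hb
  calc z (u + 2 * (b - a)) = z (2 * b - (2 * a - u)) := by congr 1; ring
    _ = z (2 * a - u) := rb _
    _ = z u := ra u

lemma stmt14_part1 (α : ℝ) (hα : 0 < α) (u : ℝ) : zfun α (u + hfun α Real.pi) = zfun α u := by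
  have hGpos : ∀ τ, 0 < Gfun α τ := by
    intro τ
    have h := Real.sin_sq_add_cos_sq τ
    unfold Gfun
    nlinarith [sq_nonneg (Real.cos τ), sq_nonneg (Real.sin τ), mul_pos hα hα,
      sq_nonneg (α * Real.sin τ), sq_nonneg (α * Real.cos τ)]
  have hG : Continuous (Gfun α) := by unfold Gfun; fun_prop
  have hfc : Continuous (fun τ => 1 / Real.sqrt (Gfun α τ)) := by
    apply Continuous.div continuous_const (Real.continuous_sqrt.comp hG)
    exact fun τ => ne_of_gt (Real.sqrt_pos.mpr (hGpos τ))
  have hint : ∀ a b : ℝ, IntervalIntegrable (fun τ => 1 / Real.sqrt (Gfun α τ))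
      MeasureTheory.volume a b := fun a b => hfc.intervalIntegrable a b
  have hderiv : ∀ x, HasDerivAt (hfun α) (Real.sqrt α * (1 / Real.sqrt (Gfun α x))) x := by
    intro x
    have h := intervalIntegral.integral_hasDerivAt_right (hint 0 x)
      (hfc.stronglyMeasurableAtFilter _ _) hfc.continuousAt
    exact h.const_mul (Real.sqrt α)
  have hdiff : Differentiable ℝ (hfun α) := fun x => (hderiv x).differentiableAt
  have hmono : StrictMono (hfun α) := by
    apply strictMono_of_deriv_pos
    intro x
    rw [(hderiv x).deriv]
    exact mul_pos (Real.sqrt_pos.mpr hα) (one_div_pos.mpr (Real.sqrt_pos.mpr (hGpos x)))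
  have hGper : ∀ τ, Gfun α (τ + Real.pi) = Gfun α τ := by
    intro τ
    unfold Gfun
    rw [Real.cos_add_pi, Real.sin_add_pi]
    ring
  have hper : Function.Periodic (fun τ => 1 / Real.sqrt (Gfun α τ)) Real.pi :=
    fun τ => by simp only [hGper τ]
  have hadd : ∀ x, hfun α (x + Real.pi) = hfun α x + hfun α Real.pi := by
    intro x
    have h1 : (∫ τ in (0:ℝ)..(x + Real.pi), 1 / Real.sqrt (Gfun α τ))
        = (∫ τ in (0:ℝ)..x, 1 / Real.sqrt (Gfun α τ))
          + ∫ τ in x..(x + Real.pi), 1 / Real.sqrt (Gfun α τ) :=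
      (intervalIntegral.integral_add_adjacent_intervals (hint 0 x) (hint x (x + Real.pi))).symm
    have h2 : (∫ τ in x..(x + Real.pi), 1 / Real.sqrt (Gfun α τ))
        = ∫ τ in (0:ℝ)..((0:ℝ) + Real.pi), 1 / Real.sqrt (Gfun α τ) :=
      hper.intervalIntegral_add_eq x 0
    unfold hfun
    rw [h1, h2, zero_add, mul_add]
  have h0 : hfun α 0 = 0 := by unfold hfun; simp
  have hπpos : 0 < hfun α Real.pi := by
    rw [← h0]
    exact hmono Real.pi_pos
  have hz : ∀ n : ℤ, hfun α (n * Real.pi) = n * hfun α Real.pi := by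
    intro n
    induction n using Int.induction_on with
    | zero => simpa using h0
    | succ n ih =>
        push_cast at ih ⊢
        have h4 : ((n : ℝ) + 1) * Real.pi = (n : ℝ) * Real.pi + Real.pi := by ring
        rw [h4, hadd, ih]
        ring
    | pred n ih =>
        have h3 := hadd ((-(n : ℝ) - 1) * Real.pi)
        have h4 : (-(n : ℝ) - 1) * Real.pi + Real.pi = (-(n : ℝ)) * Real.pi := by ring
        rw [h4] at h3
        push_cast at ih ⊢
        rw [ih] at h3
        linarith
  have hsurj : Function.Surjective (hfun α) := by
    intro y
    obtain ⟨n, hn⟩ := exists_nat_ge (|y| / hfun α Real.pi)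
    have hn' : |y| ≤ (n : ℝ) * hfun α Real.pi := by
      rw [div_le_iff₀ hπpos] at hn
      linarith
    have hlo : hfun α (-(n : ℝ) * Real.pi) = -((n : ℝ) * hfun α Real.pi) := by
      have := hz (-(n : ℤ))
      push_cast at this
      rw [this]
      ring
    have hhi : hfun α ((n : ℝ) * Real.pi) = (n : ℝ) * hfun α Real.pi := by
      have := hz (n : ℤ)
      push_cast at this
      exact this
    have hmem : y ∈ Icc (hfun α (-(n : ℝ) * Real.pi)) (hfun α ((n : ℝ) * Real.pi)) := by
      rw [hlo, hhi]
      have h1 := neg_abs_le y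
      have h2 := le_abs_self y
      constructor <;> linarith
    have hle : -(n : ℝ) * Real.pi ≤ (n : ℝ) * Real.pi := by
      have : (0:ℝ) ≤ (n : ℝ) * Real.pi := by positivity
      linarith
    obtain ⟨x, _, hx⟩ := intermediate_value_Icc hle hdiff.continuous.continuousOn hmem
    exact ⟨x, hx⟩
  have hg1 : ∀ w : ℝ, hfun α (gfun α w) = w := fun w =>
    Function.rightInverse_invFun hsurj w
  have hg2 : gfun α (u + hfun α Real.pi) = gfun α u + Real.pi := by
    apply hmono.injective
    rw [hg1, hadd, hg1]
  unfold zfun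
  rw [hg2, hGper]

/-- each `z_α` (α > 0) is periodic with period `ω = h_α(π)`; consequently
every solution of `z'' + 4·sinh z = 0` on `ℝ` is periodic. -/
theorem stmt_14 :
    (∀ α : ℝ, 0 < α → ∀ u : ℝ, zfun α (u + hfun α Real.pi) = zfun α u) ∧
    ∀ z : ℝ → ℝ, ContDiff ℝ 2 z →
      (∀ u : ℝ, deriv (deriv z) u + 4 * Real.sinh (z u) = 0) →
      ∃ T : ℝ, 0 < T ∧ ∀ u : ℝ, z (u + T) = z u :=
  ⟨fun α hα u => stmt14_part1 α hα u, fun z hz hode => stmt14_part2 z hz hode⟩
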